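/- Let (w_i) be the Fibonacci sequence of words on the alphabet {a,b}: w₀ = b, w₁ = a, w_i = w_{i-1}w_{i-2} for i ≥ 2. For k ≥ 0 let m_k be the word w_{k+2} with its last two letters removed. Then m₀ is the empty word, m₁ = a, and for k ≥ 2, m_k = m_{k-1}·s·m_{k-2}, where s = ab if k is odd and s = ba if k is even. -/
import Mathlib

private lemma take_sub_two_of_append {α : Type*} (l t : List α) (ht : t.length = 2) :
    (l ++ t).take ((l ++ t).length - 2) = l := by
  have h2 : (l ++ t).length - 2 = l.length := by simp [ht]
  rw [h2, List.take_left]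

/-- Fibonacci words: `w 0 = [b]`, `w 1 = [a]`, `w (i+2) = w (i+1) ++ w i`; `m k` is
`w (k+2)` with its last two letters removed. -/
theorem fibonacci_word_truncation {α : Type*} (a b : α) (w m : ℕ → List α)
    (hw0 : w 0 = [b]) (hw1 : w 1 = [a]) (hw : ∀ i, w (i + 2) = w (i + 1) ++ w i)
    (hm : ∀ k, m k = (w (k + 2)).take ((w (k + 2)).length - 2)) :
    m 0 = [] ∧ m 1 = [a] ∧
      ∀ k, m (k + 2) = m (k + 1) ++ (if Odd (k + 2) then [a, b] else [b, a]) ++ m k := by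
  have ends : ∀ k, ∃ u, w (k + 2) = u ++ (if Odd k then [b, a] else [a, b]) := by
    intro k
    induction k using Nat.twoStepInduction with
    | zero => exact ⟨[], by simp [hw 0, hw0, hw1]⟩
    | one => exact ⟨[a], by simp [hw 1, hw 0, hw0, hw1, Nat.odd_iff]⟩
    | more n ih _ =>
      obtain ⟨u, hu⟩ := ih
      refine ⟨w (n + 3) ++ u, ?_⟩
      have hpar : Odd (n + 2) ↔ Odd n := by simp [Nat.odd_add]
      rw [hw (n + 2), hu]
      simp [hpar]
  have key : ∀ k, w (k + 2) = m k ++ (if Odd k then [b, a] else [a, b]) := by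
    intro k
    obtain ⟨u, hu⟩ := ends k
    have hmk : m k = u := by
      rw [hm k, hu]
      exact take_sub_two_of_append u (if Odd k then [b, a] else [a, b])
        (by by_cases h : Odd k <;> simp [h])
    rw [hmk, hu]
  refine ⟨?_, ?_, ?_⟩
  · rw [hm 0, hw 0, hw0, hw1]; simp
  · rw [hm 1, hw 1, hw 0, hw0, hw1]; simp
  · intro k
    have hpar1 : Odd (k + 1) ↔ ¬ Odd k := by simp [Nat.odd_add]
    have hpar2 : Odd (k + 2) ↔ Odd k := by simp [Nat.odd_add]
    rw [hm (k + 2), hw (k + 2), show k + 2 + 1 = (k + 1) + 2 from rfl, key (k + 1), key k]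
    simp only [← List.append_assoc]
    rw [take_sub_two_of_append _ (if Odd k then [b, a] else [a, b])
        (by by_cases h : Odd k <;> simp [h])]
    by_cases h : Odd k <;> simp [hpar1, hpar2, h]
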